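/- With V_eff^1(x) = (1/(2π))∫_{-π}^{π}(x² + 4 sin²(y/2))^{-1/2} dy and Y_1(x) = (x² + 4)^{-1/2}, the difference V_eff^1 − Y_1 is in L^1(R) and ∫_R (V_eff^1(x) − Y_1(x)) dx = ln 4. -/

import Mathlib

open Real MeasureTheory intervalIntegral

open Filter Set

lemma logsin_II_half : IntervalIntegrable (fun x => Real.log (Real.sin x)) volume 0 (π/2) := by
  have hle : (0:ℝ) ≤ π/2 := by positivity
  rw [intervalIntegrable_iff_integrableOn_Ioc_of_le hle]
  have hg : IntegrableOn (fun x : ℝ => Real.log (π/2) + 2 * x ^ (-(1/2) : ℝ))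
      (Ioc (0:ℝ) (π/2)) volume := by
    apply Integrable.add
    · exact integrableOn_const (by simp [Real.volume_Ioc])
    · have := (intervalIntegrable_rpow' (a := 0) (b := π/2) (r := -(1/2)) (by norm_num))
      rw [intervalIntegrable_iff_integrableOn_Ioc_of_le hle] at this
      exact this.const_mul 2
  refine hg.mono' ((Real.measurable_log.comp Real.measurable_sin).aestronglyMeasurable) ?_
  filter_upwards [ae_restrict_mem measurableSet_Ioc] with x hx
  obtain ⟨hx0, hx2⟩ := hx
  have hsin_lb : 2/π * x ≤ Real.sin x := Real.mul_le_sin hx0.le hx2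
  have hπ : 0 < π := Real.pi_pos
  have hsin_pos : 0 < Real.sin x := lt_of_lt_of_le (by positivity) hsin_lb
  have hsin_le : Real.sin x ≤ 1 := Real.sin_le_one x
  have h1 : Real.log (Real.sin x) ≤ 0 := Real.log_nonpos hsin_pos.le hsin_le
  rw [Real.norm_eq_abs, abs_of_nonpos h1]
  have h2 : Real.log (2/π * x) ≤ Real.log (Real.sin x) :=
    Real.log_le_log (by positivity) hsin_lb
  have h3 : Real.log (2/π * x) = Real.log (2/π) + Real.log x :=
    Real.log_mul (by positivity) hx0.ne'
  have h4 : -Real.log x ≤ 2 * x ^ (-(1/2) : ℝ) := by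
    have := Real.log_le_rpow_div (x := x⁻¹) (ε := 1/2) (by positivity) (by norm_num)
    rw [Real.log_inv] at this
    calc -Real.log x ≤ (x⁻¹) ^ ((1:ℝ)/2) / (1/2) := this
      _ = 2 * x ^ (-(1/2) : ℝ) := by
          rw [Real.inv_rpow hx0.le, ← Real.rpow_neg hx0.le]
          ring
  have h5 : -Real.log (2/π) = Real.log (π/2) := by
    rw [← Real.log_inv]; norm_num
  linarith

lemma logsin_shift : (fun x : ℝ => Real.log (Real.sin (π - x))) = fun x => Real.log (Real.sin x) := by
  funext x; rw [Real.sin_pi_sub]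

lemma logcos_eq : (fun x : ℝ => Real.log (Real.sin (π/2 - x))) = fun x => Real.log (Real.cos x) := by
  funext x; rw [Real.sin_pi_div_two_sub]

lemma logsin_II_upper : IntervalIntegrable (fun x => Real.log (Real.sin x)) volume (π/2) π := by
  have h := (logsin_II_half.comp_sub_left π)
  rw [logsin_shift] at h
  rw [show π - 0 = π by ring, show π - π/2 = π/2 by ring] at h
  exact h.symm

lemma logsin_II_pi : IntervalIntegrable (fun x => Real.log (Real.sin x)) volume 0 π :=
  logsin_II_half.trans logsin_II_upper

lemma logcos_II_half : IntervalIntegrable (fun x => Real.log (Real.cos x)) volume 0 (π/2) := by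
  have h := (logsin_II_half.comp_sub_left (π/2))
  rw [logcos_eq] at h
  have e1 : π/2 - 0 = π/2 := by ring
  have e2 : π/2 - π/2 = 0 := by ring
  rw [e1, e2] at h
  exact h.symm

lemma integral_logcos_eq : ∫ x in (0:ℝ)..(π/2), Real.log (Real.cos x)
    = ∫ x in (0:ℝ)..(π/2), Real.log (Real.sin x) := by
  rw [← logcos_eq, intervalIntegral.integral_comp_sub_left (fun x => Real.log (Real.sin x)) (π/2),
    show π/2 - π/2 = 0 by ring, show π/2 - 0 = π/2 by ring]

lemma integral_logsin_pi :
    ∫ x in (0:ℝ)..π, Real.log (Real.sin x) = 2 * ∫ x in (0:ℝ)..(π/2), Real.log (Real.sin x) := by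
  rw [← intervalIntegral.integral_add_adjacent_intervals logsin_II_half logsin_II_upper]
  have : ∫ x in (π/2:ℝ)..π, Real.log (Real.sin x)
      = ∫ x in (0:ℝ)..(π/2), Real.log (Real.sin x) := by
    conv_lhs => rw [← logsin_shift]
    rw [intervalIntegral.integral_comp_sub_left (fun x => Real.log (Real.sin x)) π,
      show π - π = 0 by ring, show π - π/2 = π/2 by ring]
  rw [this]; ring

lemma integral_logsin_half :
    ∫ x in (0:ℝ)..(π/2), Real.log (Real.sin x) = -(π/2) * Real.log 2 := by
  set I := ∫ x in (0:ℝ)..(π/2), Real.log (Real.sin x) with hI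
  have hπ : 0 < π := Real.pi_pos
  have key : ∫ x in (0:ℝ)..(π/2), Real.log (Real.sin (2 * x))
      = (2:ℝ)⁻¹ • ∫ x in (0:ℝ)..π, Real.log (Real.sin x) := by
    have := intervalIntegral.integral_comp_mul_left
      (a := 0) (b := π/2) (c := (2:ℝ)) (fun x => Real.log (Real.sin x)) two_ne_zero
    rw [this, show (2:ℝ) * 0 = 0 by ring, show (2:ℝ) * (π/2) = π by ring]
  have expand : ∫ x in (0:ℝ)..(π/2), Real.log (Real.sin (2 * x))
      = ∫ x in (0:ℝ)..(π/2), (Real.log 2 + Real.log (Real.sin x) + Real.log (Real.cos x)) := by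
    apply intervalIntegral.integral_congr_ae
    have hne : ∀ᵐ x : ℝ, x ≠ π/2 := by
      have : (volume : Measure ℝ) {π/2} = 0 := measure_singleton _
      rw [ae_iff]; simpa using this
    filter_upwards [hne] with x hx hmem
    rw [Set.uIoc_of_le (by positivity : (0:ℝ) ≤ π/2)] at hmem
    have hx1 : 0 < x := hmem.1
    have hx2 : x < π/2 := lt_of_le_of_ne hmem.2 hx
    have hsin : 0 < Real.sin x := Real.sin_pos_of_pos_of_lt_pi hx1 (by linarith)
    have hcos : 0 < Real.cos x := Real.cos_pos_of_mem_Ioo ⟨by linarith, hx2⟩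
    rw [Real.sin_two_mul, Real.log_mul (by positivity) hcos.ne',
      Real.log_mul two_ne_zero hsin.ne']
  have expand2 : ∫ x in (0:ℝ)..(π/2), (Real.log 2 + Real.log (Real.sin x) + Real.log (Real.cos x))
      = (π/2) * Real.log 2 + I + I := by
    rw [intervalIntegral.integral_add (intervalIntegrable_const.add logsin_II_half) logcos_II_half]
    rw [intervalIntegral.integral_add intervalIntegrable_const logsin_II_half]
    rw [intervalIntegral.integral_const, integral_logcos_eq]
    rw [← hI, smul_eq_mul]
    ring
  rw [smul_eq_mul] at key
  have final : (2:ℝ)⁻¹ * (2 * I) = (π/2) * Real.log 2 + I + I := by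
    rw [← integral_logsin_pi, ← key, expand, expand2]
  linarith [final]

lemma arsinh_eq' (x : ℝ) : Real.arsinh x = Real.log (x + Real.sqrt (1 + x^2)) := rfl

lemma hasDerivAt_arsinh_div (c : ℝ) (hc : 0 < c) (x : ℝ) :
    HasDerivAt (fun x => Real.arsinh (x / c)) (1 / Real.sqrt (x^2 + c^2)) x := by
  have h := (Real.hasDerivAt_arsinh (x / c)).comp x ((hasDerivAt_id x).div_const c)
  refine h.congr_deriv ?_
  have h1 : (1:ℝ) + (x/c)^2 = (x^2 + c^2)/c^2 := by field_simp; ring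
  rw [h1, Real.sqrt_div (by positivity) (c^2), Real.sqrt_sq hc.le, inv_div]
  have hsq : Real.sqrt (x^2 + c^2) ≠ 0 := (Real.sqrt_pos.2 (by positivity)).ne'
  field_simp

lemma arsinh_div_eq_log_add (c : ℝ) (hc : 0 < c) (x : ℝ) (hx : 0 < x) :
    Real.arsinh (x / c) = Real.log x + Real.log (1/c + Real.sqrt ((x^2)⁻¹ + (c^2)⁻¹)) := by
  rw [arsinh_eq']
  have h1 : (1:ℝ) + (x/c)^2 = x^2 * ((x^2)⁻¹ + (c^2)⁻¹) := by field_simp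
  have h2 : Real.sqrt ((1:ℝ) + (x/c)^2) = x * Real.sqrt ((x^2)⁻¹ + (c^2)⁻¹) := by
    rw [h1, Real.sqrt_mul (by positivity), Real.sqrt_sq hx.le]
  have h3 : x / c + Real.sqrt ((1:ℝ) + (x/c)^2) = x * (1/c + Real.sqrt ((x^2)⁻¹ + (c^2)⁻¹)) := by
    rw [h2]; ring
  rw [h3, Real.log_mul hx.ne' (by positivity)]

lemma bound_aux (a x : ℝ) (ha : 0 < a) (ha2 : a ≤ 2) :
    0 ≤ 1 / Real.sqrt (x^2 + a^2) - 1 / Real.sqrt (x^2 + 4) ∧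
    1 / Real.sqrt (x^2 + a^2) - 1 / Real.sqrt (x^2 + 4) ≤ (4/a) * (1 + x^2)⁻¹ := by
  set s := Real.sqrt (x^2 + a^2) with hs
  set t := Real.sqrt (x^2 + 4) with ht
  have hs0 : 0 < s := Real.sqrt_pos.2 (by positivity)
  have ht0 : 0 < t := Real.sqrt_pos.2 (by positivity)
  have hst : s ≤ t := Real.sqrt_le_sqrt (by nlinarith)
  have hsa : a ≤ s := by
    rw [hs]
    calc a = Real.sqrt (a^2) := (Real.sqrt_sq ha.le).symm
      _ ≤ Real.sqrt (x^2 + a^2) := Real.sqrt_le_sqrt (by nlinarith)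
  have hs2 : s^2 = x^2 + a^2 := Real.sq_sqrt (by positivity)
  have ht2 : t^2 = x^2 + 4 := Real.sq_sqrt (by positivity)
  constructor
  · have := one_div_le_one_div_of_le hs0 hst
    linarith
  · have hfx : 1/s - 1/t = (4 - a^2) / (s * t * (t + s)) := by
      rw [div_sub_div _ _ hs0.ne' ht0.ne', one_mul, mul_one]
      rw [div_eq_div_iff (by positivity) (by positivity)]
      linear_combination (s*t) * ht2 - (s*t) * hs2
    rw [hfx]
    have hnum : 4 - a^2 ≤ 4 := by nlinarith
    have hden : a * (1 + x^2) ≤ s * t * (t + s) := by nlinarith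
    calc (4 - a^2) / (s * t * (t + s)) ≤ 4 / (a * (1 + x^2)) :=
          div_le_div₀ (by norm_num) hnum (by positivity) hden
      _ = (4/a) * (1 + x^2)⁻¹ := by field_simp

lemma key1D (a : ℝ) (ha : 0 < a) (ha2 : a ≤ 2) :
    Integrable (fun x : ℝ => 1 / Real.sqrt (x^2 + a^2) - 1 / Real.sqrt (x^2 + 4)) volume ∧
    ∫ x : ℝ, (1 / Real.sqrt (x^2 + a^2) - 1 / Real.sqrt (x^2 + 4))
      = 2 * (Real.log 2 - Real.log a) := by
  have hcont : Continuous (fun x : ℝ => 1 / Real.sqrt (x^2 + a^2) - 1 / Real.sqrt (x^2 + 4)) := by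
    apply Continuous.sub
    · exact continuous_const.div (Real.continuous_sqrt.comp (by continuity))
        (fun x => (Real.sqrt_pos.2 (by positivity)).ne')
    · exact continuous_const.div (Real.continuous_sqrt.comp (by continuity))
        (fun x => (Real.sqrt_pos.2 (by positivity)).ne')
  have hint : Integrable (fun x : ℝ => 1 / Real.sqrt (x^2 + a^2) - 1 / Real.sqrt (x^2 + 4))
      volume := by
    apply Integrable.mono' (g := fun x => (4/a) * (1 + x^2)⁻¹)
      (integrable_inv_one_add_sq.const_mul (4/a)) hcont.aestronglyMeasurable
    filter_upwards with x
    rw [Real.norm_eq_abs, abs_of_nonneg (bound_aux a x ha ha2).1]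
    exact (bound_aux a x ha ha2).2
  refine ⟨hint, ?_⟩
  set G : ℝ → ℝ := fun x => Real.arsinh (x / a) - Real.arsinh (x / 2) with hG
  have hderiv : ∀ x : ℝ, HasDerivAt G
      (1 / Real.sqrt (x^2 + a^2) - 1 / Real.sqrt (x^2 + 4)) x := by
    intro x
    have h1 := hasDerivAt_arsinh_div a ha x
    have h2 := hasDerivAt_arsinh_div 2 two_pos x
    have h3 := h1.sub h2
    norm_num at h3
    simp only [hG, one_div]
    exact h3
  have hF : ∀ c : ℝ, 0 < c → Tendsto (fun u : ℝ => Real.log (1/c + Real.sqrt (u + (c^2)⁻¹)))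
      (nhds 0) (nhds (Real.log (2/c))) := by
    intro c hc
    have hg : ContinuousAt (fun u : ℝ => 1/c + Real.sqrt (u + (c^2)⁻¹)) 0 :=
      continuousAt_const.add ((Real.continuous_sqrt.continuousAt).comp
        (continuousAt_id.add continuousAt_const))
    have hg0 : (fun u : ℝ => 1/c + Real.sqrt (u + (c^2)⁻¹)) 0 = 2/c := by
      simp only [zero_add, Real.sqrt_inv, Real.sqrt_sq hc.le]
      field_simp
      ring
    have h2 : Tendsto (fun u : ℝ => 1/c + Real.sqrt (u + (c^2)⁻¹)) (nhds 0) (nhds (2/c)) := by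
      rw [← hg0]; exact hg.tendsto
    have hlog : ContinuousAt Real.log (2/c) := Real.continuousAt_log (by positivity)
    exact hlog.tendsto.comp h2
  have hΦ : Tendsto (fun u : ℝ => Real.log (1/a + Real.sqrt (u + (a^2)⁻¹))
        - Real.log (1/2 + Real.sqrt (u + ((2:ℝ)^2)⁻¹))) (nhds 0)
      (nhds (Real.log (2/a))) := by
    have := (hF a ha).sub (hF 2 two_pos)
    simpa [show (2:ℝ)/2 = 1 by norm_num, Real.log_one] using this
  have hx2 : Tendsto (fun x : ℝ => ((x^2 : ℝ))⁻¹) atTop (nhds 0) :=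
    tendsto_inv_atTop_zero.comp (tendsto_pow_atTop two_ne_zero)
  have htop : Tendsto G atTop (nhds (Real.log (2/a))) := by
    have hcomp := hΦ.comp hx2
    apply hcomp.congr'
    filter_upwards [eventually_gt_atTop (0:ℝ)] with x hx
    simp only [Function.comp_apply, hG]
    rw [arsinh_div_eq_log_add a ha x hx, arsinh_div_eq_log_add 2 two_pos x hx]
    ring
  have hGodd : ∀ x : ℝ, G x = -(G (-x)) := by
    intro x
    simp only [hG, neg_div, Real.arsinh_neg]
    ring
  have hbot : Tendsto G atBot (nhds (-(Real.log (2/a)))) := by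
    have h1 : Tendsto (fun x : ℝ => G (-x)) atBot (nhds (Real.log (2/a))) :=
      htop.comp tendsto_neg_atBot_atTop
    exact h1.neg.congr (fun x => (hGodd x).symm)
  have hval := MeasureTheory.integral_of_hasDerivAt_of_tendsto hderiv hint hbot htop
  rw [hval, Real.log_div two_ne_zero ha.ne']
  ring

-- Part C helpers
lemma w_even : (fun y : ℝ => Real.log |Real.sin (-y / 2)|) = fun y => Real.log |Real.sin (y / 2)| := by
  funext y
  rw [neg_div, Real.sin_neg, abs_neg]

lemma wII_0pi : IntervalIntegrable (fun y : ℝ => Real.log |Real.sin (y / 2)|) volume 0 π := by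
  have base := logsin_II_half.comp_mul_right (c := 1/2)
  simp only [mul_one_div] at base
  rw [show (0:ℝ)/(1/2) = 0 by norm_num, show (π/2)/(1/2) = π by ring] at base
  apply base.congr
  rw [Set.uIoc_of_le Real.pi_pos.le]
  intro y hy
  have h1 : 0 ≤ Real.sin (y/2) := Real.sin_nonneg_of_nonneg_of_le_pi (by linarith [hy.1])
    (by linarith [hy.2, Real.pi_pos])
  dsimp only
  rw [abs_of_nonneg h1]

lemma wII_full : IntervalIntegrable (fun y : ℝ => Real.log |Real.sin (y / 2)|) volume (-π) π := by
  have hneg : IntervalIntegrable (fun y : ℝ => Real.log |Real.sin (y / 2)|) volume (-π) 0 := by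
    apply (IntervalIntegrable.iff_comp_neg
      (f := fun y : ℝ => Real.log |Real.sin (y / 2)|) (a := -π) (b := 0)).2
    simp only [neg_neg, neg_zero]
    rw [show (fun x : ℝ => Real.log |Real.sin (-x / 2)|) = fun y => Real.log |Real.sin (y / 2)|
      from w_even]
    exact wII_0pi.symm
  exact hneg.trans wII_0pi

lemma sin_half_pos_ne (y : ℝ) (hy : y ∈ Set.Ioc (-π) π) (hy0 : y ≠ 0) : Real.sin (y / 2) ≠ 0 := by
  have hπ := Real.pi_pos
  rcases lt_or_gt_of_ne hy0 with h | h
  · have h1 : 0 < Real.sin (-(y/2)) :=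
      Real.sin_pos_of_pos_of_lt_pi (by linarith) (by nlinarith [hy.1])
    rw [Real.sin_neg] at h1
    exact fun hc => by rw [hc] at h1; simp at h1
  · exact (Real.sin_pos_of_pos_of_lt_pi (by linarith) (by nlinarith [hy.2])).ne'

lemma slice_lemma (y : ℝ) (hy : Real.sin (y/2) ≠ 0) :
    Integrable (fun x : ℝ => 1/Real.sqrt (x^2 + 4*Real.sin (y/2)^2) - 1/Real.sqrt (x^2+4))
      volume ∧
    ∫ x : ℝ, (1/Real.sqrt (x^2 + 4*Real.sin (y/2)^2) - 1/Real.sqrt (x^2+4))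
      = -2 * Real.log |Real.sin (y/2)| := by
  have habs : 0 < |Real.sin (y/2)| := abs_pos.2 hy
  have ha : 0 < 2*|Real.sin (y/2)| := by linarith
  have ha2 : 2*|Real.sin (y/2)| ≤ 2 := by
    have := abs_le.2 ⟨Real.neg_one_le_sin (y/2), Real.sin_le_one (y/2)⟩
    linarith
  have hsq : (2*|Real.sin (y/2)|)^2 = 4*Real.sin (y/2)^2 := by
    rw [mul_pow, sq_abs]; norm_num
  obtain ⟨hi, hv⟩ := key1D _ ha ha2
  rw [hsq] at hi hv
  refine ⟨hi, ?_⟩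
  rw [hv, Real.log_mul two_ne_zero (abs_ne_zero.2 hy)]
  ring

lemma slice_nonneg (y x : ℝ) (hy : Real.sin (y/2) ≠ 0) :
    0 ≤ 1/Real.sqrt (x^2 + 4*Real.sin (y/2)^2) - 1/Real.sqrt (x^2+4) := by
  have h1 : Real.sqrt (x^2 + 4*Real.sin (y/2)^2) ≤ Real.sqrt (x^2+4) :=
    Real.sqrt_le_sqrt (by nlinarith [Real.neg_one_le_sin (y/2), Real.sin_le_one (y/2)])
  have hsq : 0 < Real.sin (y/2)^2 := by positivity
  have h0 : 0 < Real.sqrt (x^2 + 4*Real.sin (y/2)^2) := Real.sqrt_pos.2 (by nlinarith [sq_nonneg x])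
  have := one_div_le_one_div_of_le h0 h1
  linarith

/-- The averaged cylinder Coulomb potential at radius 1. -/
noncomputable def Veff1 (x : ℝ) : ℝ :=
  (1 / (2 * π)) * ∫ y in (-π)..π, 1 / Real.sqrt (x ^ 2 + 4 * Real.sin (y / 2) ^ 2)

/-- The regularized comparison potential `Y₁(x) = (x² + 4)^{-1/2}`. -/
noncomputable def Y1 (x : ℝ) : ℝ := 1 / Real.sqrt (x ^ 2 + 4)

/-- `V_eff^1 − Y₁ ∈ L¹(ℝ)` and its integral equals `ln 4`. -/
theorem Veff1_sub_Y1_integral :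
    Integrable (fun x : ℝ => Veff1 x - Y1 x) (volume : Measure ℝ) ∧
    ∫ x : ℝ, (Veff1 x - Y1 x) = Real.log 4 := by
  have hπ := Real.pi_pos
  set μy : Measure ℝ := (volume : Measure ℝ).restrict (Set.Ioc (-π) π) with hμy
  set H : ℝ × ℝ → ℝ :=
    fun p => 1/Real.sqrt (p.1^2 + 4*Real.sin (p.2/2)^2) - 1/Real.sqrt (p.1^2+4) with hH
  -- measurability
  have hc1 : Continuous (fun p : ℝ × ℝ => p.1^2 + 4*Real.sin (p.2/2)^2) :=
    ((continuous_fst.pow 2).add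
      (continuous_const.mul ((Real.continuous_sin.comp (continuous_snd.div_const 2)).pow 2)))
  have hc2 : Continuous (fun p : ℝ × ℝ => p.1^2 + (4:ℝ)) := (continuous_fst.pow 2).add
    continuous_const
  have hmeas : Measurable H := by
    apply Measurable.sub
    · exact measurable_const.div ((Real.continuous_sqrt.comp hc1).measurable)
    · exact measurable_const.div ((Real.continuous_sqrt.comp hc2).measurable)
  -- a.e. facts
  have haey : ∀ᵐ y ∂μy, Real.sin (y/2) ≠ 0 := by
    have hvol : ∀ᵐ y : ℝ, y ≠ 0 := by
      have h0 : (volume : Measure ℝ) {(0:ℝ)} = 0 := measure_singleton _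
      rw [ae_iff]; simpa using h0
    rw [hμy]
    filter_upwards [ae_restrict_mem measurableSet_Ioc, ae_restrict_of_ae hvol] with y h1 h2
    exact sin_half_pos_ne y h1 h2
  -- integrability of w on μy
  have hwint : Integrable (fun y : ℝ => -2 * Real.log |Real.sin (y/2)|) μy := by
    have h := wII_full
    rw [intervalIntegrable_iff_integrableOn_Ioc_of_le (by linarith)] at h
    exact (h.const_mul (-2))
  -- product integrability
  have Hprod : Integrable H ((volume : Measure ℝ).prod μy) := by
    rw [MeasureTheory.integrable_prod_iff' hmeas.aestronglyMeasurable]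
    constructor
    · filter_upwards [haey] with y hy
      exact (slice_lemma y hy).1
    · apply hwint.congr
      filter_upwards [haey] with y hy
      have h1 : ∫ x : ℝ, ‖H (x, y)‖ = ∫ x : ℝ,
          (1/Real.sqrt (x^2 + 4*Real.sin (y/2)^2) - 1/Real.sqrt (x^2+4)) := by
        apply MeasureTheory.integral_congr_ae
        filter_upwards with x
        rw [Real.norm_eq_abs, abs_of_nonneg (slice_nonneg y x hy)]
      rw [h1, (slice_lemma y hy).2]
  -- a.e. representation of Veff1 - Y1
  have haex : (fun x : ℝ => Veff1 x - Y1 x)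
      =ᵐ[volume] fun x => (1/(2*π)) * ∫ y, H (x, y) ∂μy := by
    have hvolx : ∀ᵐ x : ℝ, x ≠ 0 := by
      have h0 : (volume : Measure ℝ) {(0:ℝ)} = 0 := measure_singleton _
      rw [ae_iff]; simpa using h0
    filter_upwards [hvolx] with x hx
    have hxsq : 0 < x^2 := by positivity
    have hpos : ∀ y : ℝ, 0 < x^2 + 4*Real.sin (y/2)^2 := by
      intro y; nlinarith [sq_nonneg (Real.sin (y/2))]
    have hin : Continuous (fun y : ℝ => x^2 + 4*Real.sin (y/2)^2) :=
      continuous_const.add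
        (continuous_const.mul ((Real.continuous_sin.comp (continuous_id.div_const 2)).pow 2))
    have hkcont : Continuous (fun y : ℝ => 1/Real.sqrt (x^2 + 4*Real.sin (y/2)^2)) :=
      continuous_const.div (Real.continuous_sqrt.comp hin)
        (fun y => (Real.sqrt_pos.2 (hpos y)).ne')
    have hkint : IntegrableOn (fun y : ℝ => 1/Real.sqrt (x^2 + 4*Real.sin (y/2)^2))
        (Set.Ioc (-π) π) volume := hkcont.integrableOn_Ioc
    have hcint : IntegrableOn (fun _ : ℝ => Y1 x) (Set.Ioc (-π) π) volume :=
      integrableOn_const (by rw [Real.volume_Ioc]; exact ENNReal.ofReal_ne_top)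
    have e1 : Veff1 x = (1/(2*π)) *
        ∫ y in Set.Ioc (-π) π, 1/Real.sqrt (x^2 + 4*Real.sin (y/2)^2) := by
      rw [Veff1, intervalIntegral.integral_of_le (by linarith)]
    have e2 : ∫ y, H (x, y) ∂μy =
        (∫ y in Set.Ioc (-π) π, 1/Real.sqrt (x^2 + 4*Real.sin (y/2)^2)) - (2*π) * Y1 x := by
      rw [hμy]
      have : (fun y : ℝ => H (x, y)) = fun y : ℝ =>
          1/Real.sqrt (x^2 + 4*Real.sin (y/2)^2) - Y1 x := rfl
      rw [this, MeasureTheory.integral_sub hkint hcint, setIntegral_const, Real.volume_real_Ioc,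
        show π - -π = 2*π by ring, max_eq_left (by positivity : (0:ℝ) ≤ 2*π), smul_eq_mul]
    rw [e1, e2]
    field_simp
  -- Integrability conclusion
  have hInt1 : Integrable (fun x => (1/(2*π)) * ∫ y, H (x, y) ∂μy) volume :=
    Hprod.integral_prod_left.const_mul _
  refine ⟨hInt1.congr haex.symm, ?_⟩
  -- value
  rw [MeasureTheory.integral_congr_ae haex, MeasureTheory.integral_const_mul]
  have hswap : ∫ x : ℝ, ∫ y, H (x, y) ∂μy = ∫ y, (∫ x : ℝ, H (x, y)) ∂μy :=
    MeasureTheory.integral_integral_swap Hprod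
  rw [hswap]
  have hinner : ∫ y, (∫ x : ℝ, H (x, y)) ∂μy
      = ∫ y, -2 * Real.log |Real.sin (y/2)| ∂μy := by
    apply MeasureTheory.integral_congr_ae
    filter_upwards [haey] with y hy
    exact (slice_lemma y hy).2
  rw [hinner]
  -- compute the y-integral
  have hyval : ∫ y, -2 * Real.log |Real.sin (y/2)| ∂μy = 4 * π * Real.log 2 := by
    rw [hμy, ← intervalIntegral.integral_of_le (show -π ≤ π by linarith)]
    rw [intervalIntegral.integral_const_mul]
    have hsplit : ∫ y in (-π)..π, Real.log |Real.sin (y/2)|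
        = (∫ y in (-π)..(0:ℝ), Real.log |Real.sin (y/2)|)
          + ∫ y in (0:ℝ)..π, Real.log |Real.sin (y/2)| := by
      have m1 : IntervalIntegrable (fun y : ℝ => Real.log |Real.sin (y/2)|) volume (-π) 0 := by
        apply wII_full.mono_set
        rw [Set.uIcc_of_le (show -π ≤ (0:ℝ) by linarith), Set.uIcc_of_le (show -π ≤ π by linarith)]
        exact Set.Icc_subset_Icc le_rfl (by linarith)
      have m2 : IntervalIntegrable (fun y : ℝ => Real.log |Real.sin (y/2)|) volume 0 π := by
        apply wII_full.mono_set
        rw [Set.uIcc_of_le (show (0:ℝ) ≤ π by linarith), Set.uIcc_of_le (show -π ≤ π by linarith)]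
        exact Set.Icc_subset_Icc (by linarith) le_rfl
      exact (intervalIntegral.integral_add_adjacent_intervals m1 m2).symm
    have hneg : ∫ y in (-π)..(0:ℝ), Real.log |Real.sin (y/2)|
        = ∫ y in (0:ℝ)..π, Real.log |Real.sin (y/2)| := by
      have h := intervalIntegral.integral_comp_neg (a := (0:ℝ)) (b := π)
        (fun y => Real.log |Real.sin (y/2)|)
      rw [neg_zero, w_even] at h
      exact h.symm
    have hhalf : ∫ y in (0:ℝ)..π, Real.log |Real.sin (y/2)| = -π * Real.log 2 := by
      have habs : ∫ y in (0:ℝ)..π, Real.log |Real.sin (y/2)|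
          = ∫ y in (0:ℝ)..π, Real.log (Real.sin (y/2)) := by
        apply intervalIntegral.integral_congr
        intro y hy
        rw [Set.uIcc_of_le (by linarith)] at hy
        have : 0 ≤ Real.sin (y/2) := Real.sin_nonneg_of_nonneg_of_le_pi
          (by linarith [hy.1]) (by linarith [hy.2])
        simp only [abs_of_nonneg this]
      rw [habs]
      have hdiv := intervalIntegral.integral_comp_div (a := (0:ℝ)) (b := π) (c := 2)
        (fun u => Real.log (Real.sin u)) two_ne_zero
      rw [hdiv, show (0:ℝ)/2 = 0 by norm_num, integral_logsin_half, smul_eq_mul]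
      ring
    rw [hsplit, hneg, hhalf]
    ring
  rw [hyval, show (4:ℝ) = 2^2 by norm_num, Real.log_pow]
  push_cast
  field_simp
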